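/- Let r > 0 and let μ be a finite signed measure on the interval [−r, 0]. Let f : ℝ → ℝ satisfy f(v) = 0 for v < 0, f continuous on [0, ∞), and f(t) = 1 + ∫₀ᵗ ( ∫_{[−r,0]} f(s + θ) dμ(θ) ) ds for all t ≥ 0. Let h : [0, ∞) → ℝ be continuous. Define φ : ℝ → ℝ by φ(v) = ∫₀ᵛ f(v − s) h(s) ds for v ≥ 0 and φ(v) = 0 for v < 0. Then for every t ≥ 0: φ(t) = ∫₀ᵗ ( ∫_{[−r,0]} φ(u + θ) dμ(θ) + h(u) ) du. -/

import Mathlib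

open MeasureTheory Set

noncomputable def sintegral {α : Type*} [MeasurableSpace α]
    (μ : MeasureTheory.SignedMeasure α) (f : α → ℝ) : ℝ :=
  (∫ x, f x ∂μ.toJordanDecomposition.posPart) - ∫ x, f x ∂μ.toJordanDecomposition.negPart

lemma intervalIntegrable_of_bdd {F : ℝ → ℝ} (hm : AEStronglyMeasurable F volume) {C a b : ℝ}
    (hb : ∀ x ∈ Set.uIoc a b, |F x| ≤ C) : IntervalIntegrable F volume a b := by
  rw [intervalIntegrable_iff]
  apply Measure.integrableOn_of_bounded (M := C)
  · rw [Set.uIoc]; exact measure_Ioc_lt_top.ne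
  · exact hm
  · filter_upwards [ae_restrict_mem measurableSet_uIoc] with x hx
    simpa [Real.norm_eq_abs] using hb x hx

lemma swap_aux {α : Type*} [MeasurableSpace α] (ν : Measure α) [IsFiniteMeasure ν]
    {t : ℝ} (ht : 0 ≤ t) (F : ℝ → α → ℝ)
    (hFm : Measurable (fun p : ℝ × α => F p.1 p.2))
    {C : ℝ} (hC : ∀ᵐ u ∂(volume.restrict (Set.Ioc 0 t)), ∀ᵐ θ ∂ν, |F u θ| ≤ C) :
    ∫ u in (0:ℝ)..t, ∫ θ, F u θ ∂ν = ∫ θ, (∫ u in (0:ℝ)..t, F u θ) ∂ν := by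
  haveI : IsFiniteMeasure (volume.restrict (Set.Ioc (0:ℝ) t)) :=
    ⟨by rw [Measure.restrict_apply_univ]; exact measure_Ioc_lt_top⟩
  have hset : MeasurableSet {p : ℝ × α | |F p.1 p.2| ≤ C} :=
    measurableSet_le hFm.abs measurable_const
  have hae : ∀ᵐ p ∂((volume.restrict (Set.Ioc 0 t)).prod ν), |F p.1 p.2| ≤ C :=
    (Measure.ae_prod_iff_ae_ae hset).mpr hC
  have hint : Integrable (fun p : ℝ × α => F p.1 p.2)
      ((volume.restrict (Set.Ioc 0 t)).prod ν) := by
    refine Integrable.mono' (integrable_const C) hFm.aestronglyMeasurable ?_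
    simpa [Real.norm_eq_abs] using hae
  rw [intervalIntegral.integral_of_le ht]
  simp only [intervalIntegral.integral_of_le ht]
  exact integral_integral_swap hint

theorem stmt_13 (r : ℝ) (hr : 0 < r)
    (μ : MeasureTheory.SignedMeasure (Set.Icc (-r) (0 : ℝ)))
    (f : ℝ → ℝ)
    (hf0 : ∀ v : ℝ, v < 0 → f v = 0)
    (hfc : ContinuousOn f (Set.Ici 0))
    (hf : ∀ t : ℝ, 0 ≤ t →
      f t = 1 + ∫ s in (0 : ℝ)..t, sintegral μ (fun θ => f (s + θ.1)))
    (h : ℝ → ℝ) (hh : ContinuousOn h (Set.Ici 0))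
    (φ : ℝ → ℝ)
    (hφneg : ∀ v : ℝ, v < 0 → φ v = 0)
    (hφ : ∀ v : ℝ, 0 ≤ v → φ v = ∫ s in (0 : ℝ)..v, f (v - s) * h s) :
    ∀ t : ℝ, 0 ≤ t →
      φ t = ∫ u in (0 : ℝ)..t, (sintegral μ (fun θ => φ (u + θ.1)) + h u) := by
  intro t ht
  haveI := μ.toJordanDecomposition.posPart_finite
  haveI := μ.toJordanDecomposition.negPart_finite
  have hmax : Continuous fun x : ℝ => max x 0 := continuous_id.max continuous_const
  -- measurability of f
  have hfm : Measurable f := by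
    have hcont : Continuous fun x : ℝ => f (max x 0) :=
      hfc.comp_continuous hmax fun x => le_max_right x 0
    have hind : f = (Set.Ici (0:ℝ)).indicator fun x => f (max x 0) := by
      funext x
      rcases le_or_gt 0 x with hx | hx
      · simp [Set.indicator_apply, Set.mem_Ici, hx, max_eq_left hx]
      · simp [Set.indicator_apply, Set.mem_Ici, not_le.mpr hx, hf0 x hx]
    rw [hind]; exact hcont.measurable.indicator measurableSet_Ici
  -- continuous extension of h
  set h' : ℝ → ℝ := fun x => h (max x 0) with hh'def
  have hh'c : Continuous h' := hh.comp_continuous hmax fun x => le_max_right x 0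
  have hh'eq : ∀ s : ℝ, 0 ≤ s → h' s = h s := fun s hs => by
    simp only [hh'def, max_eq_left hs]
  -- f is interval integrable on every interval
  have hfbd : ∀ M : ℝ, ∃ C, 0 ≤ C ∧ ∀ x ≤ M, |f x| ≤ C := by
    intro M
    obtain ⟨C, hC⟩ := (isCompact_Icc (a := (0:ℝ)) (b := M)).exists_bound_of_continuousOn
      (hfc.mono fun x hx => hx.1)
    refine ⟨max C 0, le_max_right _ _, fun x hx => ?_⟩
    rcases lt_or_ge x 0 with hx0 | hx0
    · rw [hf0 x hx0]; simpa using le_max_right C 0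
    · exact le_trans (le_of_eq (Real.norm_eq_abs _).symm |>.trans (hC x ⟨hx0, hx⟩))
        (le_max_left _ _)
  have hfi : ∀ a b : ℝ, IntervalIntegrable f volume a b := by
    intro a b
    obtain ⟨C, _, hC⟩ := hfbd (max a b)
    exact intervalIntegrable_of_bdd hfm.aestronglyMeasurable (fun x hx => hC x hx.2)
  obtain ⟨Cf, hCf0, hCf⟩ := hfbd t
  -- bound for h' on [0,t]
  obtain ⟨Ch, hCh⟩ := (isCompact_Icc (a := (0:ℝ)) (b := t)).exists_bound_of_continuousOn
    hh'c.continuousOn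
  set ChM := max Ch 0 with hChM
  have hChM0 : 0 ≤ ChM := le_max_right _ _
  have hCh' : ∀ s ∈ Set.Icc (0:ℝ) t, |h' s| ≤ ChM := fun s hs =>
    le_trans (le_of_eq (Real.norm_eq_abs _).symm |>.trans (hCh s hs)) (le_max_left _ _)
  -- null integral of f over intervals left of 0
  have hnull : ∀ a : ℝ, a ≤ 0 → (∫ w in a..(0:ℝ), f w) = 0 := by
    intro a ha
    rw [intervalIntegral.integral_of_le ha]
    apply integral_eq_zero_of_ae
    have h0 : ∀ᵐ w : ℝ ∂volume, w ≠ 0 := by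
      refine compl_mem_ae_iff.mpr ?_
      exact measure_singleton (0:ℝ)
    filter_upwards [ae_restrict_mem measurableSet_Ioc, ae_restrict_of_ae h0] with w hw hw0
    exact hf0 w (lt_of_le_of_ne hw.2 hw0)
  -- primitive of f
  set P : ℝ → ℝ := fun x => ∫ w in (0:ℝ)..x, f w with hPdef
  have hPc : Continuous P := intervalIntegral.continuous_primitive hfi 0
  have hPshift : ∀ c : ℝ, c ≤ 0 → ∀ x : ℝ, (∫ w in (0:ℝ)..x, f (w + c)) = P (x + c) := by
    intro c hc x
    rw [intervalIntegral.integral_comp_add_right, zero_add,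
      ← intervalIntegral.integral_add_adjacent_intervals (hfi c 0) (hfi 0 (x + c)),
      hnull c hc, zero_add]
  -- the convolution with fixed upper limit t
  set g : ℝ → ℝ := fun x => ∫ s in (0:ℝ)..t, f (x - s) * h' s with hgdef
  -- continuity of f away from 0
  have hfCA : ∀ y : ℝ, y ≠ 0 → ContinuousAt f y := by
    intro y hy
    rcases lt_or_gt_of_ne hy with hy | hy
    · have heq : f =ᶠ[nhds y] fun _ => (0:ℝ) := by
        filter_upwards [Iio_mem_nhds hy] with z hz using hf0 z hz
      exact continuousAt_const.congr heq.symm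
    · exact (hfc y hy.le).continuousAt (Ici_mem_nhds hy)
  have hgc : Continuous g := by
    rw [continuous_iff_continuousAt]
    intro x₀
    obtain ⟨C, hC0, hC⟩ := hfbd (x₀ + 1)
    have hne : ∀ᵐ s : ℝ ∂volume, s ≠ x₀ := by
      refine compl_mem_ae_iff.mpr ?_
      exact measure_singleton x₀
    simp only [hgdef]
    apply intervalIntegral.continuousAt_of_dominated_interval (bound := fun _ => C * ChM)
    · exact Filter.Eventually.of_forall fun x =>
        ((hfm.comp (measurable_const.sub measurable_id)).mul hh'c.measurable).aestronglyMeasurable.restrict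
    · filter_upwards [Iio_mem_nhds (lt_add_one x₀)] with x hx
      refine Filter.Eventually.of_forall fun s hs => ?_
      rw [Set.uIoc_of_le ht] at hs
      rw [Real.norm_eq_abs, abs_mul]
      exact mul_le_mul (hC _ (by linarith [hs.1, hs.2, Set.mem_Iio.mp hx]))
        (hCh' s ⟨hs.1.le, hs.2⟩) (abs_nonneg _) hC0
    · exact intervalIntegrable_const
    · filter_upwards [hne] with s hs _
      have hca : ContinuousAt (fun x => f (x - s)) x₀ := by
        show ContinuousAt (f ∘ fun x => x - s) x₀
        have h1 : ContinuousAt (fun x : ℝ => x - s) x₀ := (continuous_sub_right s).continuousAt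
        exact ContinuousAt.comp (hfCA (x₀ - s) (sub_ne_zero.mpr (Ne.symm hs))) h1
      exact hca.mul continuousAt_const
  -- integrability of the convolution integrand
  have hgi : ∀ v : ℝ, v ≤ t → ∀ a b : ℝ, 0 ≤ a → a ≤ t → 0 ≤ b → b ≤ t →
      IntervalIntegrable (fun s => f (v - s) * h' s) volume a b := by
    intro v hv a b ha0 hat hb0 hbt
    refine intervalIntegrable_of_bdd (F := fun s => f (v - s) * h' s)
      ((hfm.comp (measurable_const.sub measurable_id)).mul hh'c.measurable).aestronglyMeasurable
      (C := Cf * ChM) ?_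
    intro s hs
    have hs1 : 0 < s := lt_of_le_of_lt (le_min ha0 hb0) hs.1
    have hs2 : s ≤ t := le_trans hs.2 (max_le hat hbt)
    rw [abs_mul]
    exact mul_le_mul (hCf _ (by linarith)) (hCh' s ⟨hs1.le, hs2⟩) (abs_nonneg _) hCf0
  -- φ agrees with g up to t
  have hφg : ∀ v : ℝ, v ≤ t → φ v = g v := by
    intro v hv
    rcases lt_or_ge v 0 with hv0 | hv0
    · rw [hφneg v hv0]
      symm
      simp only [hgdef]
      rw [intervalIntegral.integral_of_le ht]
      apply integral_eq_zero_of_ae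
      filter_upwards [ae_restrict_mem measurableSet_Ioc] with s hs
      show f (v - s) * h' s = 0
      rw [hf0 (v - s) (by linarith [hs.1]), zero_mul]
    · rw [hφ v hv0]
      have e1 : (∫ s in (0:ℝ)..v, f (v - s) * h s) = ∫ s in (0:ℝ)..v, f (v - s) * h' s := by
        apply intervalIntegral.integral_congr
        intro s hs
        rw [Set.uIcc_of_le hv0] at hs
        show f (v - s) * h s = f (v - s) * h' s
        rw [hh'eq s hs.1]
      have e2 : (∫ s in v..t, f (v - s) * h' s) = 0 := by
        rw [intervalIntegral.integral_of_le hv]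
        apply integral_eq_zero_of_ae
        filter_upwards [ae_restrict_mem measurableSet_Ioc] with s hs
        show f (v - s) * h' s = 0
        rw [hf0 (v - s) (by linarith [hs.1]), zero_mul]
      have e3 := intervalIntegral.integral_add_adjacent_intervals
        (hgi v hv 0 v le_rfl ht hv0 hv) (hgi v hv v t hv0 hv ht le_rfl)
      simp only [hgdef]
      rw [e1, ← e3, e2, add_zero]
  -- bounds for g and P on [-r, t]
  obtain ⟨Cg, hCgb⟩ := (isCompact_Icc (a := -r) (b := t)).exists_bound_of_continuousOn
    hgc.continuousOn
  have hCg : ∀ x ∈ Set.Icc (-r) t, |g x| ≤ max Cg 0 := fun x hx =>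
    le_trans (le_of_eq (Real.norm_eq_abs _).symm |>.trans (hCgb x hx)) (le_max_left _ _)
  obtain ⟨Cp, hCpb⟩ := (isCompact_Icc (a := -r) (b := t)).exists_bound_of_continuousOn
    hPc.continuousOn
  have hCp : ∀ x ∈ Set.Icc (-r) t, |P x| ≤ max Cp 0 := fun x hx =>
    le_trans (le_of_eq (Real.norm_eq_abs _).symm |>.trans (hCpb x hx)) (le_max_left _ _)
  -- step 4 : signed integral of shifted primitive
  have hkey4 : ∀ (ν : Measure (Set.Icc (-r) (0:ℝ))), IsFiniteMeasure ν → ∀ x : ℝ, 0 ≤ x → x ≤ t →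
      (∫ θ, P (x + θ.1) ∂ν) = ∫ w in (0:ℝ)..x, (∫ θ, f (w + θ.1) ∂ν) := by
    intro ν hν x hx hxt
    haveI := hν
    have e1 : (∫ θ, P (x + θ.1) ∂ν)
        = ∫ θ : Set.Icc (-r) (0:ℝ), (∫ w in (0:ℝ)..x, f (w + θ.1)) ∂ν :=
      integral_congr_ae (Filter.Eventually.of_forall fun θ => (hPshift θ.1 θ.2.2 x).symm)
    rw [e1]
    refine (swap_aux ν hx (fun w θ => f (w + θ.1))
      (hfm.comp (measurable_fst.add (measurable_subtype_coe.comp measurable_snd)))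
      (C := Cf) ?_).symm
    filter_upwards [ae_restrict_mem measurableSet_Ioc] with w hw
    exact Filter.Eventually.of_forall fun θ => hCf _ (by linarith [hw.2, θ.2.2])
  -- integrability of w ↦ ∫θ f(w+θ)dν
  have hintf : ∀ (ν : Measure (Set.Icc (-r) (0:ℝ))), IsFiniteMeasure ν →
      IntervalIntegrable (fun w => ∫ θ, f (w + θ.1) ∂ν) volume 0 t := by
    intro ν hν
    haveI := hν
    have sm0 : StronglyMeasurable (fun p : ℝ × (Set.Icc (-r) (0:ℝ)) => f (p.1 + p.2.1)) :=
      (hfm.comp (measurable_fst.add (measurable_subtype_coe.comp measurable_snd))).stronglyMeasurable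
    have sm0' : StronglyMeasurable (fun w : ℝ => ∫ θ, f (w + θ.1) ∂ν) :=
      StronglyMeasurable.integral_prod_right' (ν := ν) sm0
    refine intervalIntegrable_of_bdd (F := fun w => ∫ θ, f (w + θ.1) ∂ν)
      (C := Cf * (ν Set.univ).toReal) sm0'.aestronglyMeasurable ?_
    · intro w hw
      rw [Set.uIoc_of_le ht] at hw
      calc |∫ θ, f (w + θ.1) ∂ν| = ‖∫ θ, f (w + θ.1) ∂ν‖ := (Real.norm_eq_abs _).symm
        _ ≤ Cf * (ν Set.univ).toReal := norm_integral_le_of_norm_le_const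
            (Filter.Eventually.of_forall fun θ => by
              rw [Real.norm_eq_abs]; exact hCf _ (by linarith [hw.2, θ.2.2]))
  have hsintP : ∀ x : ℝ, 0 ≤ x → x ≤ t →
      sintegral μ (fun θ => P (x + θ.1)) = f x - 1 := by
    intro x hx hxt
    have hsub : Set.uIcc (0:ℝ) x ⊆ Set.uIcc (0:ℝ) t := by
      rw [Set.uIcc_of_le hx, Set.uIcc_of_le ht]
      exact Set.Icc_subset_Icc le_rfl hxt
    have i1 := (hintf _ μ.toJordanDecomposition.posPart_finite).mono_set hsub
    have i2 := (hintf _ μ.toJordanDecomposition.negPart_finite).mono_set hsub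
    rw [sintegral, hkey4 _ μ.toJordanDecomposition.posPart_finite x hx hxt,
      hkey4 _ μ.toJordanDecomposition.negPart_finite x hx hxt,
      ← intervalIntegral.integral_sub i1 i2]
    have e : (fun w => (∫ θ, f (w + θ.1) ∂μ.toJordanDecomposition.posPart)
        - ∫ θ, f (w + θ.1) ∂μ.toJordanDecomposition.negPart)
        = fun w => sintegral μ (fun θ => f (w + θ.1)) := rfl
    rw [e, hf x hx]
    ring
  -- step 2 : inner identity for fixed shift c
  have hstep2 : ∀ c : ℝ, -r ≤ c → c ≤ 0 →
      (∫ u in (0:ℝ)..t, g (u + c)) = ∫ s in (0:ℝ)..t, h' s * P (t + c - s) := by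
    intro c hc1 hc2
    have e0 : (∫ u in (0:ℝ)..t, g (u + c))
        = ∫ u in (0:ℝ)..t, (∫ s, f (u + c - s) * h' s ∂(volume.restrict (Set.Ioc 0 t))) := by
      apply intervalIntegral.integral_congr
      intro u _
      simp only [hgdef]
      rw [intervalIntegral.integral_of_le ht]
    have hswap := swap_aux (volume.restrict (Set.Ioc (0:ℝ) t)) ht
      (fun u s => f (u + c - s) * h' s)
      (((hfm.comp ((measurable_fst.add_const c).sub measurable_snd)).mul
        (hh'c.measurable.comp measurable_snd))) (C := Cf * ChM) ?_
    swap
    · filter_upwards [ae_restrict_mem measurableSet_Ioc] with u hu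
      filter_upwards [ae_restrict_mem measurableSet_Ioc] with s hs
      rw [abs_mul]
      exact mul_le_mul (hCf _ (by linarith [hu.2, hs.1, hc2]))
        (hCh' s ⟨hs.1.le, hs.2⟩) (abs_nonneg _) hCf0
    rw [e0, hswap, ← intervalIntegral.integral_of_le ht]
    apply intervalIntegral.integral_congr
    intro s hs
    rw [Set.uIcc_of_le ht] at hs
    show (∫ u in (0:ℝ)..t, f (u + c - s) * h' s) = h' s * P (t + c - s)
    rw [intervalIntegral.integral_mul_const]
    simp only [add_sub_assoc]
    rw [hPshift (c - s) (by linarith [hs.1]) t, mul_comm, ← add_sub_assoc]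
  -- integrability of u ↦ ∫θ g(u+θ)dν on [0,t]
  have hintg : ∀ (ν : Measure (Set.Icc (-r) (0:ℝ))), IsFiniteMeasure ν →
      IntervalIntegrable (fun u => ∫ θ, g (u + θ.1) ∂ν) volume 0 t := by
    intro ν hν
    haveI := hν
    have sm1 : StronglyMeasurable (fun p : ℝ × (Set.Icc (-r) (0:ℝ)) => g (p.1 + p.2.1)) :=
      (hgc.comp (continuous_fst.add (continuous_subtype_val.comp continuous_snd))).stronglyMeasurable
    have sm1' : StronglyMeasurable (fun u : ℝ => ∫ θ, g (u + θ.1) ∂ν) :=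
      StronglyMeasurable.integral_prod_right' (ν := ν) sm1
    refine intervalIntegrable_of_bdd (F := fun u => ∫ θ, g (u + θ.1) ∂ν)
      (C := max Cg 0 * (ν Set.univ).toReal) sm1'.aestronglyMeasurable ?_
    · intro u hu
      rw [Set.uIoc_of_le ht] at hu
      calc |∫ θ, g (u + θ.1) ∂ν| = ‖∫ θ, g (u + θ.1) ∂ν‖ := (Real.norm_eq_abs _).symm
        _ ≤ max Cg 0 * (ν Set.univ).toReal := norm_integral_le_of_norm_le_const
            (Filter.Eventually.of_forall fun θ => by
              rw [Real.norm_eq_abs]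
              exact hCg _ ⟨by linarith [hu.1, θ.2.1], by linarith [hu.2, θ.2.2]⟩)
  -- integrability of s ↦ h' s * ∫θ P(t+θ-s)dν on [0,t]
  have hintp : ∀ (ν : Measure (Set.Icc (-r) (0:ℝ))), IsFiniteMeasure ν →
      IntervalIntegrable (fun s => h' s * ∫ θ, P (t + θ.1 - s) ∂ν) volume 0 t := by
    intro ν hν
    haveI := hν
    have sm2 : StronglyMeasurable (fun p : ℝ × (Set.Icc (-r) (0:ℝ)) => P (t + p.2.1 - p.1)) :=
      (hPc.comp ((continuous_const.add
        (continuous_subtype_val.comp continuous_snd)).sub continuous_fst)).stronglyMeasurable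
    have sm2' : StronglyMeasurable (fun s : ℝ => ∫ θ, P (t + θ.1 - s) ∂ν) :=
      StronglyMeasurable.integral_prod_right' (ν := ν) sm2
    refine intervalIntegrable_of_bdd (F := fun s => h' s * ∫ θ, P (t + θ.1 - s) ∂ν)
      (C := ChM * (max Cp 0 * (ν Set.univ).toReal))
      (hh'c.stronglyMeasurable.mul sm2').aestronglyMeasurable ?_
    · intro s hs
      rw [Set.uIoc_of_le ht] at hs
      rw [abs_mul]
      refine mul_le_mul (hCh' s ⟨hs.1.le, hs.2⟩) ?_ (abs_nonneg _) hChM0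
      calc |∫ θ, P (t + θ.1 - s) ∂ν| = ‖∫ θ, P (t + θ.1 - s) ∂ν‖ := (Real.norm_eq_abs _).symm
        _ ≤ max Cp 0 * (ν Set.univ).toReal := norm_integral_le_of_norm_le_const
            (Filter.Eventually.of_forall fun θ => by
              rw [Real.norm_eq_abs]
              exact hCp _ ⟨by linarith [hs.2, θ.2.1], by linarith [hs.1, θ.2.2]⟩)
  -- the key computation for each part of the Jordan decomposition
  have hkey : ∀ (ν : Measure (Set.Icc (-r) (0:ℝ))), IsFiniteMeasure ν →
      (∫ u in (0:ℝ)..t, (∫ θ, g (u + θ.1) ∂ν))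
        = ∫ s in (0:ℝ)..t, h' s * (∫ θ, P (t + θ.1 - s) ∂ν) := by
    intro ν hν
    haveI := hν
    have hsw1 := swap_aux ν ht (fun u θ => g (u + θ.1))
      (hgc.measurable.comp (measurable_fst.add (measurable_subtype_coe.comp measurable_snd)))
      (C := max Cg 0) ?_
    swap
    · filter_upwards [ae_restrict_mem measurableSet_Ioc] with u hu
      exact Filter.Eventually.of_forall fun θ =>
        hCg _ ⟨by linarith [hu.1, θ.2.1], by linarith [hu.2, θ.2.2]⟩
    rw [hsw1]
    have e1 : (∫ θ : Set.Icc (-r) (0:ℝ), (∫ u in (0:ℝ)..t, g (u + θ.1)) ∂ν)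
        = ∫ θ : Set.Icc (-r) (0:ℝ), (∫ s in (0:ℝ)..t, h' s * P (t + θ.1 - s)) ∂ν :=
      integral_congr_ae (Filter.Eventually.of_forall fun θ => hstep2 θ.1 θ.2.1 θ.2.2)
    rw [e1]
    have hsw2 := swap_aux ν ht (fun s θ => h' s * P (t + θ.1 - s))
      ((hh'c.measurable.comp measurable_fst).mul
        (hPc.measurable.comp ((measurable_const.add
          (measurable_subtype_coe.comp measurable_snd)).sub measurable_fst)))
      (C := ChM * max Cp 0) ?_
    swap
    · filter_upwards [ae_restrict_mem measurableSet_Ioc] with s hs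
      refine Filter.Eventually.of_forall fun θ => ?_
      rw [abs_mul]
      exact mul_le_mul (hCh' s ⟨hs.1.le, hs.2⟩)
        (hCp _ ⟨by linarith [hs.2, θ.2.1], by linarith [hs.1, θ.2.2]⟩)
        (abs_nonneg _) hChM0
    rw [← hsw2]
    apply intervalIntegral.integral_congr
    intro s _
    exact integral_const_mul _ _
  -- assembly
  rw [hφ t ht]
  have eR : (∫ u in (0:ℝ)..t, (sintegral μ (fun θ => φ (u + θ.1)) + h u))
      = ∫ u in (0:ℝ)..t,
          ((∫ θ, g (u + θ.1) ∂μ.toJordanDecomposition.posPart)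
            - (∫ θ, g (u + θ.1) ∂μ.toJordanDecomposition.negPart) + h' u) := by
    apply intervalIntegral.integral_congr
    intro u hu
    rw [Set.uIcc_of_le ht] at hu
    have e : (fun θ : Set.Icc (-r) (0:ℝ) => φ (u + θ.1))
        = fun θ : Set.Icc (-r) (0:ℝ) => g (u + θ.1) :=
      funext fun θ => hφg _ (by linarith [θ.2.2, hu.2])
    simp only [sintegral, e, hh'eq u hu.1]
  rw [eR]
  have iGp := hintg _ μ.toJordanDecomposition.posPart_finite
  have iGn := hintg _ μ.toJordanDecomposition.negPart_finite
  have ih' : IntervalIntegrable h' volume 0 t := hh'c.intervalIntegrable 0 t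
  have iPp := hintp _ μ.toJordanDecomposition.posPart_finite
  have iPn := hintp _ μ.toJordanDecomposition.negPart_finite
  rw [intervalIntegral.integral_add (iGp.sub iGn) ih',
    intervalIntegral.integral_sub iGp iGn,
    hkey _ μ.toJordanDecomposition.posPart_finite,
    hkey _ μ.toJordanDecomposition.negPart_finite,
    ← intervalIntegral.integral_sub iPp iPn]
  have eQ : (∫ s in (0:ℝ)..t,
      (h' s * (∫ θ, P (t + θ.1 - s) ∂μ.toJordanDecomposition.posPart)
        - h' s * (∫ θ, P (t + θ.1 - s) ∂μ.toJordanDecomposition.negPart)))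
      = ∫ s in (0:ℝ)..t, (f (t - s) * h' s - h' s) := by
    apply intervalIntegral.integral_congr
    intro s hs
    rw [Set.uIcc_of_le ht] at hs
    have e := hsintP (t - s) (by linarith [hs.2]) (by linarith [hs.1])
    rw [sintegral] at e
    have earg : ∀ θ : Set.Icc (-r) (0:ℝ), t + θ.1 - s = t - s + θ.1 := fun θ => by ring
    show h' s * _ - h' s * _ = f (t - s) * h' s - h' s
    simp only [earg]
    rw [← mul_sub, e]
    ring
  rw [eQ]
  have ifh' : IntervalIntegrable (fun s => f (t - s) * h' s) volume 0 t :=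
    hgi t le_rfl 0 t le_rfl ht ht le_rfl
  rw [intervalIntegral.integral_sub ifh' ih']
  have tri : ∀ A B : ℝ, A - B + B = A := fun A B => by ring
  rw [tri]
  apply intervalIntegral.integral_congr
  intro s hs
  rw [Set.uIcc_of_le ht] at hs
  show f (t - s) * h s = f (t - s) * h' s
  rw [hh'eq s hs.1]
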